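/- For a connected finite multigraph G = (V,E) with nullity n(G) = |E|−|V|+1, the specialization θ_G(1, ξ−ξ⁻¹) equals ξ^{1−n(G)}·(ξ+ξ⁻¹)^{n(G)−1} + ξ^{n(G)−1}·(ξ+ξ⁻¹)^{n(G)−1}, where θ_G(β,γ) := Σ_{s⊆E} β^{|s|} ∏_{i∈V} f_{d_i(s)}(γ). In particular, θ_G(1,γ) depends only on the nullity n(G); setting ξ=1 gives θ_G(1,0) = 2^{n(G)}, and ξ=(1+√5)/2 gives θ_G(1,1) = ((5−√5)/2)^{n(G)−1} + ((5+√5)/2)^{n(G)−1}. -/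

import Mathlib

open scoped Classical

/-- The polynomials `f_n`: `f 0 = 1`, `f 1 = 0`, `f (n+2) = γ f (n+1) + f n`,
evaluated at `γ`. -/
noncomputable def fval {R : Type*} [CommRing R] (γ : R) : ℕ → R
  | 0 => 1
  | 1 => 0
  | (n + 2) => γ * fval γ (n + 1) + fval γ n

/-- Degree of vertex `i` in the spanning subgraph `(V, s)` of the multigraph with
edge-endpoint map `ends : E → Sym2 V` (a loop counts twice). -/
noncomputable def mdeg {V E : Type*} [DecidableEq V]
    (ends : E → Sym2 V) (s : Finset E) (i : V) : ℕ :=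
  ∑ e ∈ s, (if ends e = Sym2.diag i then 2 else if i ∈ ends e then 1 else 0)

/-- The theta polynomial `θ_G(β,γ) = Σ_{s ⊆ E} β^{|s|} ∏_{i ∈ V} f_{d_i(s)}(γ)`. -/
noncomputable def theta {V E : Type*} [Fintype V] [Fintype E] [DecidableEq V]
    {R : Type*} [CommRing R] (ends : E → Sym2 V) (β γ : R) : R :=
  ∑ s : Finset E, β ^ s.card * ∏ i : V, fval γ (mdeg ends s i)

open Finset

set_option linter.unusedSectionVars false


lemma fval_key (ξ : ℝ) (hξ : ξ ≠ 0) (d : ℕ) :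
    fval (ξ - ξ⁻¹) d * (ξ + ξ⁻¹) * ξ ^ d = ξ ^ (2*d) * ξ⁻¹ + (-1:ℝ)^d * ξ := by
  have hinv : ξ * ξ⁻¹ = 1 := mul_inv_cancel₀ hξ
  induction d using Nat.twoStepInduction with
  | zero => simp [fval]; ring
  | one => simp [fval]; linear_combination (-ξ)*hinv
  | more n ih ih1 =>
    show ((ξ - ξ⁻¹) * fval (ξ - ξ⁻¹) (n+1) + fval (ξ - ξ⁻¹) n) * (ξ + ξ⁻¹) * ξ ^ (n+2) = _
    linear_combination (ξ-ξ⁻¹)*ξ*ih1 + ξ^2*ih + ((-1:ℝ)^n*ξ - ξ^(2*n+2)*ξ⁻¹)*hinv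

lemma fval_closed (ξ : ℝ) (hξ : ξ ≠ 0) (d : ℕ) :
    fval (ξ - ξ⁻¹) d * (ξ + ξ⁻¹) = ξ ^ ((d:ℤ) - 1) + (-1:ℝ)^d * ξ ^ (1 - (d:ℤ)) := by
  have hpow : (ξ:ℝ)^d ≠ 0 := pow_ne_zero _ hξ
  apply mul_right_cancel₀ hpow
  rw [fval_key ξ hξ d]
  have e1 : ξ ^ ((d:ℤ) - 1) * ξ ^ d = ξ ^ (2*d) * ξ⁻¹ := by
    rw [← zpow_natCast ξ d, ← zpow_add₀ hξ]
    rw [show (d:ℤ) - 1 + d = (2*d : ℕ) - 1 by push_cast; ring]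
    rw [zpow_sub₀ hξ, zpow_natCast, zpow_one, div_eq_mul_inv]
  have e2 : ξ ^ (1 - (d:ℤ)) * ξ ^ d = ξ := by
    rw [← zpow_natCast ξ d, ← zpow_add₀ hξ]
    rw [show (1:ℤ) - d + d = 1 by ring, zpow_one]
  rw [add_mul, e1, mul_assoc, e2]

lemma fval_sum (ξ : ℝ) (hξ : ξ ≠ 0) (d : ℕ) :
    fval (ξ - ξ⁻¹) d * (ξ + ξ⁻¹) =
      ∑ ε ∈ ({-1,1} : Finset ℤ), ((ε:ℝ))^d * ξ ^ (ε * ((d:ℤ) - 1)) := by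
  rw [fval_closed ξ hξ d]
  rw [show ({-1,1} : Finset ℤ) = insert (-1) {1} from rfl,
    Finset.sum_insert (by decide), Finset.sum_singleton]
  rw [show (-1 : ℤ) * ((d:ℤ) - 1) = 1 - d by ring, one_mul]
  push_cast
  ring

section comb
variable {V E : Type*} [Fintype V] [Fintype E] [DecidableEq V] (ends : E → Sym2 V)

def cc (e : E) (i : V) : ℕ :=
  if ends e = Sym2.diag i then 2 else if i ∈ ends e then 1 else 0

lemma mdeg_eq (s : Finset E) (i : V) : mdeg ends s i = ∑ e ∈ s, cc ends e i := rfl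

lemma cc_eq {e : E} {u v : V} (h : ends e = s(u,v)) (i : V) :
    cc ends e i = (if i = u then 1 else 0) + (if i = v then 1 else 0) := by
  rcases eq_or_ne i u with hu | hu <;> rcases eq_or_ne i v with hv | hv <;>
      subst_vars <;>
    simp_all [cc, Sym2.diag, Sym2.eq_iff, Sym2.mem_iff] <;> tauto

lemma prod_pow_ite {α : Type*} [CommMonoid α] (a : V → α) (w : V) :
    ∏ i : V, a i ^ (if i = w then 1 else 0) = a w := by
  have h : ∀ i ∈ (univ : Finset V), a i ^ (if i = w then 1 else 0)
      = (if i = w then a i else 1) := by intro i _; split <;> simp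
  rw [Finset.prod_congr rfl h, Finset.prod_ite_eq' univ w a]
  simp


lemma zpow_prod_ite (ξ : ℝ) (x : V → ℤ) (w : V) :
    ∏ i : V, ξ ^ (x i * (if i = w then (1:ℤ) else 0)) = ξ ^ (x w) := by
  have h : ∀ i ∈ (univ : Finset V), ξ ^ (x i * (if i = w then (1:ℤ) else 0))
      = (if i = w then ξ ^ (x i) else 1) := by intro i _; split <;> simp
  rw [Finset.prod_congr rfl h, Finset.prod_ite_eq' univ w (fun i => ξ ^ (x i))]
  simp

lemma zpow_sum' {ι : Type*} (ξ : ℝ) (hξ : ξ ≠ 0) (s : Finset ι) (g : ι → ℤ) :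
    ξ ^ (∑ i ∈ s, g i) = ∏ i ∈ s, ξ ^ (g i) := by
  classical
  induction s using Finset.induction_on with
  | empty => simp
  | @insert a s ha ih => rw [Finset.sum_insert ha, Finset.prod_insert ha, zpow_add₀ hξ, ih]

lemma W_eq (ξ : ℝ) (hξ : ξ ≠ 0) (x : V → ℤ) {e : E} {u v : V} (h : ends e = s(u,v)) :
    (∏ i : V, (((x i : ℝ))^(cc ends e i) * ξ ^ (x i * (cc ends e i : ℤ)))) =
      ((x u : ℝ) * (x v : ℝ)) * ξ ^ (x u + x v) := by
  rw [Finset.prod_mul_distrib]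
  have h1 : ∏ i : V, ((x i : ℝ))^(cc ends e i) = (x u : ℝ) * (x v : ℝ) := by
    simp_rw [cc_eq ends h, pow_add]
    rw [Finset.prod_mul_distrib, prod_pow_ite, prod_pow_ite]
  have h2 : ∏ i : V, ξ ^ (x i * (cc ends e i : ℤ)) = ξ ^ (x u + x v) := by
    have key : ∀ i, x i * (cc ends e i : ℤ)
        = x i * (if i = u then 1 else 0) + x i * (if i = v then 1 else 0) := by
      intro i; rw [cc_eq ends h]; push_cast; ring
    simp_rw [key, zpow_add₀ hξ]
    rw [Finset.prod_mul_distrib, zpow_prod_ite, zpow_prod_ite, ← zpow_add₀ hξ]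
  rw [h1, h2]

lemma per_s (ξ : ℝ) (hξ : ξ ≠ 0) (x : V → ℤ) (s : Finset E) :
    ∏ i : V, (((x i : ℝ))^(mdeg ends s i) * ξ ^ (x i * ((mdeg ends s i : ℤ) - 1))) =
      (∏ i : V, ξ ^ (-(x i))) *
        ∏ e ∈ s, ∏ i : V, (((x i : ℝ))^(cc ends e i) * ξ ^ (x i * (cc ends e i : ℤ))) := by
  have split1 : ∀ i, ξ ^ (x i * ((mdeg ends s i : ℤ) - 1))
      = ξ ^ (x i * (mdeg ends s i : ℤ)) * ξ ^ (-(x i)) := by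
    intro i; rw [← zpow_add₀ hξ]; congr 1; ring
  simp_rw [split1]
  calc ∏ i : V, (((x i:ℝ))^(mdeg ends s i) * (ξ^(x i * (mdeg ends s i:ℤ)) * ξ^(-(x i))))
      = (∏ i : V, ξ^(-(x i))) *
          ∏ i : V, (((x i:ℝ))^(mdeg ends s i) * ξ^(x i * (mdeg ends s i:ℤ))) := by
        rw [← Finset.prod_mul_distrib]; exact Finset.prod_congr rfl fun i _ => by ring
    _ = (∏ i : V, ξ^(-(x i))) *
          ∏ i : V, ∏ e ∈ s, (((x i:ℝ))^(cc ends e i) * ξ^(x i * (cc ends e i:ℤ))) := by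
        congr 1
        refine Finset.prod_congr rfl fun i _ => ?_
        rw [Finset.prod_mul_distrib, mdeg_eq]
        congr 1
        · rw [Finset.prod_pow_eq_pow_sum]
        · rw [← zpow_sum' ξ hξ]; congr 1; rw [Nat.cast_sum, Finset.mul_sum]
    _ = _ := by rw [Finset.prod_comm]

lemma sum_over_s (ξ : ℝ) (hξ : ξ ≠ 0) (x : V → ℤ) :
    ∑ s : Finset E, ∏ i : V, (((x i:ℝ))^(mdeg ends s i) * ξ^(x i * ((mdeg ends s i:ℤ) - 1))) =
      (∏ i : V, ξ^(-(x i))) *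
        ∏ e : E, (1 + ∏ i : V, (((x i:ℝ))^(cc ends e i) * ξ^(x i * (cc ends e i:ℤ)))) := by
  simp_rw [per_s ends ξ hξ x]
  rw [← Finset.mul_sum]
  congr 1
  simp_rw [add_comm (1:ℝ)]
  rw [Finset.prod_add]
  simp

end comb

section conn
variable {V E : Type*} [Fintype V] [Fintype E] [DecidableEq V] (ends : E → Sym2 V)

lemma exists_bad_edge
    (hconn : ∀ a b : V,
      Relation.ReflTransGen (fun u w => ∃ e : E, u ∈ ends e ∧ w ∈ ends e) a b)
    (x : V → ℤ) {i j : V} (hij : x i ≠ x j) :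
    ∃ (e : E) (p q : V), p ∈ ends e ∧ q ∈ ends e ∧ x p ≠ x q := by
  by_contra hc
  push_neg at hc
  have mono : ∀ a b : V,
      Relation.ReflTransGen (fun u w => ∃ e : E, u ∈ ends e ∧ w ∈ ends e) a b → x a = x b := by
    intro a b h
    induction h with
    | refl => rfl
    | tail h1 h2 ih => obtain ⟨e, hp, hq⟩ := h2; exact ih.trans (hc e _ _ hp hq)
  exact hij (mono i j (hconn i j))

lemma term_zero (ξ : ℝ) (hξ : ξ ≠ 0)
    (hconn : ∀ a b : V,
      Relation.ReflTransGen (fun u w => ∃ e : E, u ∈ ends e ∧ w ∈ ends e) a b)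
    (x : V → ℤ) (hx : ∀ i, x i = -1 ∨ x i = 1) {i j : V} (hij : x i ≠ x j) :
    ∏ e : E, (1 + ∏ i : V, (((x i:ℝ))^(cc ends e i) * ξ^(x i * (cc ends e i:ℤ)))) = 0 := by
  obtain ⟨e, p, q, hp, hq, hpq⟩ := exists_bad_edge ends hconn x hij
  apply Finset.prod_eq_zero (Finset.mem_univ e)
  obtain ⟨u, v, h⟩ : ∃ u v, ends e = s(u,v) := (ends e).inductionOn (fun u v => ⟨u, v, rfl⟩)
  rw [W_eq ends ξ hξ x h]
  rw [h, Sym2.mem_iff] at hp hq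
  have huv : x u ≠ x v := by
    rcases hp with rfl | rfl <;> rcases hq with rfl | rfl
    · exact absurd rfl hpq
    · exact hpq
    · exact fun hh => hpq hh.symm
    · exact absurd rfl hpq
  rcases hx u with h1 | h1 <;> rcases hx v with h2 | h2 <;>
    rw [h1, h2] at huv ⊢ <;> norm_num at huv <;> norm_num

end conn

section main
variable {V E : Type*} [Fintype V] [Fintype E] [DecidableEq V] (ends : E → Sym2 V)

lemma sum_x (ξ : ℝ) (hξ : ξ ≠ 0) [Nonempty V]
    (hconn : ∀ a b : V,
      Relation.ReflTransGen (fun u w => ∃ e : E, u ∈ ends e ∧ w ∈ ends e) a b) :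
    ∑ x ∈ Fintype.piFinset (fun _ : V => ({-1,1} : Finset ℤ)),
        ((∏ i : V, ξ^(-(x i))) *
          ∏ e : E, (1 + ∏ i : V, (((x i:ℝ))^(cc ends e i) * ξ^(x i * (cc ends e i:ℤ))))) =
      ξ^(Fintype.card V) * (1+ξ⁻¹^2)^(Fintype.card E) +
        (ξ⁻¹)^(Fintype.card V) * (1+ξ^2)^(Fintype.card E) := by
  set cm : V → ℤ := fun _ => -1 with hcm
  set c1 : V → ℤ := fun _ => 1 with hc1
  have hne : cm ≠ c1 := by
    intro h
    have := congrFun h (Classical.arbitrary V)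
    simp [hcm, hc1] at this
  have hsub : ({cm, c1} : Finset (V → ℤ)) ⊆ Fintype.piFinset (fun _ : V => ({-1,1} : Finset ℤ)) := by
    intro x hx
    rw [Finset.mem_insert, Finset.mem_singleton] at hx
    rw [Fintype.mem_piFinset]
    rcases hx with rfl | rfl <;> intro i <;> simp [hcm, hc1]
  rw [← Finset.sum_subset hsub]
  · rw [Finset.sum_pair hne]
    congr 1
    · -- cm term
      have e1 : ∏ i : V, ξ ^ (-cm i) = ξ ^ (Fintype.card V) := by
        simp [hcm, Finset.card_univ]
      have e2 : ∀ e : E,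
          (1 + ∏ i : V, (((cm i:ℝ))^(cc ends e i) * ξ^(cm i * (cc ends e i:ℤ)))) = 1 + ξ⁻¹^2 := by
        intro e
        obtain ⟨u, v, h⟩ : ∃ u v, ends e = s(u,v) := (ends e).inductionOn (fun u v => ⟨u, v, rfl⟩)
        rw [W_eq ends ξ hξ cm h]
        norm_num [hcm, zpow_neg]
      rw [e1, Finset.prod_congr rfl (fun e _ => e2 e), Finset.prod_const, Finset.card_univ]
    · -- c1 term
      have e1 : ∏ i : V, ξ ^ (-c1 i) = (ξ⁻¹) ^ (Fintype.card V) := by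
        simp [hc1, Finset.card_univ]
      have e2 : ∀ e : E,
          (1 + ∏ i : V, (((c1 i:ℝ))^(cc ends e i) * ξ^(c1 i * (cc ends e i:ℤ)))) = 1 + ξ^2 := by
        intro e
        obtain ⟨u, v, h⟩ : ∃ u v, ends e = s(u,v) := (ends e).inductionOn (fun u v => ⟨u, v, rfl⟩)
        rw [W_eq ends ξ hξ c1 h]
        norm_num [hc1]
      rw [e1, Finset.prod_congr rfl (fun e _ => e2 e), Finset.prod_const, Finset.card_univ]
  · intro x hxP hxn
    have hx : ∀ i, x i = -1 ∨ x i = 1 := by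
      rw [Fintype.mem_piFinset] at hxP
      intro i
      have := hxP i
      simpa using this
    rw [Finset.mem_insert, Finset.mem_singleton] at hxn
    push_neg at hxn
    obtain ⟨hxm, hx1⟩ := hxn
    obtain ⟨i, hi⟩ : ∃ i, x i = 1 := by
      by_contra hcon
      push_neg at hcon
      exact hxm (funext fun i => (hx i).resolve_right (hcon i))
    obtain ⟨j, hj⟩ : ∃ j, x j = -1 := by
      by_contra hcon
      push_neg at hcon
      exact hx1 (funext fun i => (hx i).resolve_left (hcon i))
    have hij : x i ≠ x j := by rw [hi, hj]; norm_num
    rw [term_zero ends ξ hξ hconn x hx hij, mul_zero]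

end main

section final
variable {V E : Type*} [Fintype V] [Fintype E] [DecidableEq V] (ends : E → Sym2 V)

lemma theta_mul [Nonempty V]
    (hconn : ∀ a b : V,
      Relation.ReflTransGen (fun u w => ∃ e : E, u ∈ ends e ∧ w ∈ ends e) a b)
    (ξ : ℝ) (hξ : ξ ≠ 0) :
    theta ends (1:ℝ) (ξ - ξ⁻¹) * (ξ + ξ⁻¹)^(Fintype.card V) =
      ξ^(Fintype.card V) * (1+ξ⁻¹^2)^(Fintype.card E) +
        (ξ⁻¹)^(Fintype.card V) * (1+ξ^2)^(Fintype.card E) := by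
  rw [theta]
  simp only [one_pow, one_mul]
  rw [Finset.sum_mul]
  have step1 : ∀ s : Finset E,
      (∏ i : V, fval (ξ - ξ⁻¹) (mdeg ends s i)) * (ξ + ξ⁻¹)^(Fintype.card V) =
        ∏ i : V, (fval (ξ - ξ⁻¹) (mdeg ends s i) * (ξ + ξ⁻¹)) := by
    intro s
    rw [Finset.prod_mul_distrib, Finset.prod_const, Finset.card_univ]
  simp_rw [step1, fval_sum ξ hξ, Finset.prod_univ_sum]
  rw [Finset.sum_comm]
  rw [Finset.sum_congr rfl (fun x _ => sum_over_s ends ξ hξ x)]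
  exact sum_x ends ξ hξ hconn

end final

/-- For a connected multigraph `G` with nullity `n(G) = |E| - |V| + 1`:
`θ_G(1, ξ-ξ⁻¹) = ξ^{1-n(G)} (ξ+ξ⁻¹)^{n(G)-1} + ξ^{n(G)-1} (ξ+ξ⁻¹)^{n(G)-1}`;
in particular `θ_G(1,0) = 2^{n(G)}` and
`θ_G(1,1) = ((5-√5)/2)^{n(G)-1} + ((5+√5)/2)^{n(G)-1}`. -/
theorem stmt_16 {V E : Type*} [Fintype V] [Fintype E] [DecidableEq V] [Nonempty V]
    (ends : E → Sym2 V)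
    (hconn : ∀ a b : V,
      Relation.ReflTransGen (fun u w => ∃ e : E, u ∈ ends e ∧ w ∈ ends e) a b) :
    (∀ ξ : ℝ, ξ ≠ 0 → ξ + ξ⁻¹ ≠ 0 →
      theta ends (1 : ℝ) (ξ - ξ⁻¹) =
        ξ ^ (1 - ((Fintype.card E : ℤ) - Fintype.card V + 1)) *
          (ξ + ξ⁻¹) ^ (((Fintype.card E : ℤ) - Fintype.card V + 1) - 1) +
        ξ ^ (((Fintype.card E : ℤ) - Fintype.card V + 1) - 1) *
          (ξ + ξ⁻¹) ^ (((Fintype.card E : ℤ) - Fintype.card V + 1) - 1)) ∧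
    theta ends (1 : ℝ) 0 = (2 : ℝ) ^ ((Fintype.card E : ℤ) - Fintype.card V + 1) ∧
    theta ends (1 : ℝ) 1 =
      ((5 - Real.sqrt 5) / 2) ^ (((Fintype.card E : ℤ) - Fintype.card V + 1) - 1) +
      ((5 + Real.sqrt 5) / 2) ^ (((Fintype.card E : ℤ) - Fintype.card V + 1) - 1) := by
  set M := Fintype.card V with hM
  set N := Fintype.card E with hN
  have main : ∀ ξ : ℝ, ξ ≠ 0 → ξ + ξ⁻¹ ≠ 0 →
      theta ends (1 : ℝ) (ξ - ξ⁻¹) =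
        ξ ^ (1 - ((N : ℤ) - M + 1)) * (ξ + ξ⁻¹) ^ (((N : ℤ) - M + 1) - 1) +
        ξ ^ (((N : ℤ) - M + 1) - 1) * (ξ + ξ⁻¹) ^ (((N : ℤ) - M + 1) - 1) := by
    intro ξ hξ hA
    have h1 : (1:ℤ) - ((N:ℤ) - M + 1) = (M:ℤ) - N := by ring
    have h2 : ((N:ℤ) - M + 1) - 1 = (N:ℤ) - M := by ring
    rw [h1, h2]
    have hApow : (ξ + ξ⁻¹)^M ≠ 0 := pow_ne_zero _ hA
    apply mul_right_cancel₀ hApow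
    rw [theta_mul ends hconn ξ hξ]
    have k1 : (1+ξ⁻¹^2) = ξ⁻¹ * (ξ + ξ⁻¹) := by field_simp
    have k2 : (1+ξ^2) = ξ * (ξ + ξ⁻¹) := by field_simp; ring_nf
    rw [k1, k2, mul_pow, mul_pow]
    have zp : ∀ (a : ℝ), a ≠ 0 → ∀ m n : ℕ, a ^ ((m:ℤ) - n) = a^m * (a⁻¹)^n := by
      intro a ha m n
      rw [zpow_sub₀ ha, zpow_natCast, zpow_natCast, inv_pow, div_eq_mul_inv]
    rw [zp ξ hξ M N, zp ξ hξ N M, zp (ξ+ξ⁻¹) hA N M]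
    have hAc : ((ξ+ξ⁻¹)⁻¹)^M * (ξ+ξ⁻¹)^M = 1 := by
      rw [← mul_pow, inv_mul_cancel₀ hA, one_pow]
    linear_combination (-(ξ^M * ξ⁻¹^N + ξ^N * ξ⁻¹^M) * (ξ+ξ⁻¹)^N) * hAc
  refine ⟨main, ?_, ?_⟩
  · -- ξ = 1
    have h := main 1 one_ne_zero (by norm_num)
    simp only [inv_one, sub_self, one_zpow] at h
    rw [h]
    rw [show (N:ℤ) - M + 1 = ((N:ℤ) - M + 1 - 1) + 1 by ring,
      zpow_add_one₀ (two_ne_zero)]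
    ring
  · -- ξ = golden ratio
    set r := Real.sqrt 5 with hrdef
    have hr : r^2 = 5 := Real.sq_sqrt (by norm_num)
    have hrpos : 0 < r := Real.sqrt_pos.mpr (by norm_num)
    set φ : ℝ := (1 + r)/2 with hφdef
    have hφpos : 0 < φ := by positivity
    have hφ : φ ≠ 0 := ne_of_gt hφpos
    have hφinv : φ⁻¹ = (r - 1)/2 := by
      apply inv_eq_of_mul_eq_one_right
      rw [hφdef]
      linear_combination (1/4 : ℝ) * hr
    have hsub : φ - φ⁻¹ = 1 := by rw [hφinv, hφdef]; ring
    have hadd : φ + φ⁻¹ = r := by rw [hφinv, hφdef]; ring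
    have h := main φ hφ (by rw [hadd]; exact ne_of_gt hrpos)
    rw [hsub, hadd] at h
    rw [h]
    rw [show (1:ℤ) - ((N:ℤ) - M + 1) = -(((N:ℤ) - M + 1) - 1) by ring, zpow_neg, ← inv_zpow,
      ← mul_zpow, ← mul_zpow]
    have g1 : φ⁻¹ * r = (5 - r)/2 := by rw [hφinv]; linear_combination (1/2 : ℝ) * hr
    have g2 : φ * r = (5 + r)/2 := by rw [hφdef]; linear_combination (1/2 : ℝ) * hr
    rw [g1, g2]
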